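/- Let n₁, n₂, H be positive integers and l, u ∈ ℝ^{n₁} with 0 ≤ l_i ≤ u_i for all i. Let W ∈ ℝ^{n₁×n₂} satisfy W_{ij} ≥ 0 for all i, j and l_i ≤ Σ_{j=1}^{n₂} W_{ij} ≤ u_i for each i, and suppose there exist z ∈ {0,1}^{n₂×H} and α ∈ ℝ^{n₁×n₂×H} such that for all i, j, h: (a) W_{ij} = (2^H / (2^H − 1)) Σ_{h=1}^{H} 2^{−h} α_{ijh}; (b) l_i z_{jh} ≤ α_{ijh} ≤ u_i z_{jh}; (c) u_i z_{jh} + Σ_{j'=1}^{n₂} W_{ij'} − u_i ≤ α_{ijh} ≤ l_i z_{jh} + Σ_{j'=1}^{n₂} W_{ij'} − l_i. Then rank(W) ≤ 1, and hence W belongs to U^row(l,u) = { W ∈ ℝ^{n₁×n₂} : W ≥ 0 entrywise; l_i ≤ Σ_j W_{ij} ≤ u_i for each i; rank(W) ≤ 1 }. -/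
import Mathlib


/-- Containment D̲^row(l,u,H) ⊆ U^row(l,u): an entrywise nonnegative matrix with
row sums in [lᵢ, uᵢ] satisfying the binary inner-discretization constraints with
McCormick envelopes has rank at most one, hence belongs to U^row(l,u).
Here h : Fin H encodes the index h+1 ∈ {1,…,H}. -/
theorem statement19 (n₁ n₂ H : ℕ) (hn₁ : 0 < n₁) (hn₂ : 0 < n₂) (hH : 0 < H)
    (l u : Fin n₁ → ℝ) (hl : ∀ i, 0 ≤ l i) (hlu : ∀ i, l i ≤ u i)
    (W : Matrix (Fin n₁) (Fin n₂) ℝ)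
    (hWpos : ∀ i j, 0 ≤ W i j)
    (hWrow : ∀ i, l i ≤ ∑ j, W i j ∧ ∑ j, W i j ≤ u i)
    (z : Fin n₂ → Fin H → ℝ) (α : Fin n₁ → Fin n₂ → Fin H → ℝ)
    (hz : ∀ j h, z j h = 0 ∨ z j h = 1)
    (ha : ∀ i j, W i j =
      (2 : ℝ) ^ H / ((2 : ℝ) ^ H - 1) * ∑ h, (2 : ℝ)⁻¹ ^ (h.val + 1) * α i j h)
    (hb : ∀ i j h, l i * z j h ≤ α i j h ∧ α i j h ≤ u i * z j h)
    (hc : ∀ i j h,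
      u i * z j h + (∑ j', W i j') - u i ≤ α i j h ∧
      α i j h ≤ l i * z j h + (∑ j', W i j') - l i) :
    W.rank ≤ 1 ∧
    W ∈ {W : Matrix (Fin n₁) (Fin n₂) ℝ |
      (∀ i j, 0 ≤ W i j) ∧ (∀ i, l i ≤ ∑ j, W i j ∧ ∑ j, W i j ≤ u i) ∧
      W.rank ≤ 1} := by
  -- First: α i j h = (row sum i) * z j h
  have key : ∀ i j h, α i j h = (∑ j', W i j') * z j h := by
    intro i j h
    rcases hz j h with h0 | h1
    · have hb' := hb i j h
      rw [h0, mul_zero] at hb' ⊢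
      linarith [hb'.1, hb'.2]
    · have hc' := hc i j h
      rw [h1, mul_one] at hc' ⊢
      linarith [hc'.1, hc'.2]
  set r : Fin n₁ → ℝ := fun i => ∑ j', W i j' with hr
  set t : Fin n₂ → ℝ := fun j =>
    (2 : ℝ) ^ H / ((2 : ℝ) ^ H - 1) * ∑ h, (2 : ℝ)⁻¹ ^ (h.val + 1) * z j h with ht
  have hW : W = Matrix.vecMulVec r t := by
    ext i j
    rw [Matrix.vecMulVec_apply, ha i j]
    simp only [key, hr, ht]
    have : ∑ h : Fin H, (2:ℝ)⁻¹ ^ (h.val + 1) * ((∑ j', W i j') * z j h)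
        = (∑ j', W i j') * ∑ h : Fin H, (2:ℝ)⁻¹ ^ (h.val + 1) * z j h := by
      rw [Finset.mul_sum]
      exact Finset.sum_congr rfl (fun h _ => by ring)
    rw [this]; ring
  have hrank : W.rank ≤ 1 := by
    rw [hW, Matrix.vecMulVec_eq (Fin 1)]
    calc (Matrix.replicateCol (Fin 1) r * Matrix.replicateRow (Fin 1) t).rank
        ≤ (Matrix.replicateCol (Fin 1) r).rank := Matrix.rank_mul_le_left _ _
      _ ≤ Fintype.card (Fin 1) := Matrix.rank_le_card_width _
      _ = 1 := by simp
  exact ⟨hrank, hWpos, hWrow, hrank⟩
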